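/- arXiv:2602.10391 — 2 statements merged into one kernel-verified Lean document; each statement's English description precedes it below -/
import Mathlib

section
/- Let x be a root of unity with x ≠ 1, let n ∈ ℤ, and let s ∈ ℂ satisfy 0 < |s − n| < 1. Then the series Σ_{m=0}^{∞} ((−1)^m Li_{m+1}(x) − Li_{m+1}(x^{−1})) (s − n)^m converges and Φ(s; x) = x^{−n} ( 1/(s − n) + Σ_{m=0}^{∞} ((−1)^m Li_{m+1}(x) − Li_{m+1}(x^{−1})) (s − n)^m ). -/
open Filter Finset

/-- A complex number is a root of unity if some positive power of it equals 1. -/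
def IsRootOfUnity (z : ℂ) : Prop := ∃ N : ℕ, 0 < N ∧ z ^ N = 1

open scoped Classical in
/-- Partial sum `Σ_{0<n_1<⋯<n_r≤N} Π_j x_j^{n_j} (n_j + b_j − 1)^{−k_j}` where the list `K`
consists of the triples `(k_j, x_j, b_j)`. -/
noncomputable def cmhzP (K : List (ℕ × ℂ × ℂ)) (N : ℕ) : ℂ :=
  ∑ n ∈ Finset.univ.filter (fun n : Fin K.length → Fin N => StrictMono n),
    ∏ j : Fin K.length,
      (K.get j).2.1 ^ ((n j : ℕ) + 1) /
        ((((n j : ℕ) + 1 : ℕ) : ℂ) + (K.get j).2.2 - 1) ^ (K.get j).1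

/-- Cyclotomic multiple Hurwitz zeta value: the limit of the partial sums `cmhzP`. -/
noncomputable def cmhz (K : List (ℕ × ℂ × ℂ)) : ℂ := limUnder atTop (cmhzP K)

/-- Cyclotomic multiple zeta value (all Hurwitz parameters equal to 1). -/
noncomputable def cmzv (K : List (ℕ × ℂ)) : ℂ := cmhz (K.map fun p => (p.1, p.2, 1))

/-- Cyclotomic multiple t-value (all Hurwitz parameters equal to 1/2). -/
noncomputable def tval (K : List (ℕ × ℂ)) : ℂ := cmhz (K.map fun p => (p.1, p.2, (1 : ℂ)/2))

/-- Depth-one cyclotomic zeta value `Li_k(x)`. -/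
noncomputable def li1 (k : ℕ) (x : ℂ) : ℂ := cmzv [(k, x)]

/-- Depth-one cyclotomic Hurwitz zeta value `Li_k(x; b)`. -/
noncomputable def lih1 (k : ℕ) (x b : ℂ) : ℂ := cmhz [(k, x, b)]

/-- Depth-one cyclotomic t-value `t_k(x)`. -/
noncomputable def tval1 (k : ℕ) (x : ℂ) : ℂ := tval [(k, x)]

/-- The generalized digamma-type series `φ(s; x) = Σ_{k≥0} x^k/(k+s)`. -/
noncomputable def phiF (s x : ℂ) : ℂ :=
  limUnder atTop (fun N : ℕ => ∑ t ∈ Finset.range (N + 1), x ^ t / ((t : ℂ) + s))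

/-- The extended trigonometric function `Φ(s; x) = φ(s; x) − φ(−s; x⁻¹) − 1/s`. -/
noncomputable def PhiF (s x : ℂ) : ℂ := phiF s x - phiF (-s) x⁻¹ - 1 / s


/- ===== auxiliary lemmas ===== -/

section Aux

lemma rou_ne_zero {x : ℂ} (hx : IsRootOfUnity x) : x ≠ 0 := by
  obtain ⟨N, hN, h⟩ := hx
  intro h0; rw [h0, zero_pow hN.ne'] at h; exact one_ne_zero h.symm

lemma rou_abs {x : ℂ} (hx : IsRootOfUnity x) : ‖x‖ = 1 := by
  obtain ⟨N, hN, h⟩ := hx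
  have habs : (‖x‖) ^ N = 1 := by rw [← norm_pow, h, norm_one]
  rcases lt_trichotomy (‖x‖) 1 with h' | h' | h'
  · have h2 := pow_lt_one₀ (norm_nonneg x) h' hN.ne'
    rw [habs] at h2; linarith
  · exact h'
  · have h2 := one_lt_pow₀ h' hN.ne'
    rw [habs] at h2; linarith

lemma rou_inv {x : ℂ} (hx : IsRootOfUnity x) : IsRootOfUnity x⁻¹ := by
  obtain ⟨N, hN, h⟩ := hx
  exact ⟨N, hN, by rw [inv_pow, h, inv_one]⟩

lemma rou_inv_ne_one {x : ℂ} (hx : IsRootOfUnity x) (h1 : x ≠ 1) : x⁻¹ ≠ 1 := by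
  intro h; apply h1
  have := rou_ne_zero hx
  field_simp at h; exact h.symm

lemma geom_bound {x : ℂ} (hx : ‖x‖ = 1) (h1 : x ≠ 1) (N : ℕ) :
    ‖∑ k ∈ range N, x ^ (k + 1)‖ ≤ 2 / ‖1 - x‖ := by
  have hx1 : x - 1 ≠ 0 := sub_ne_zero.mpr h1
  have hsum : ∑ k ∈ range N, x ^ (k + 1) = x * ((x ^ N - 1) / (x - 1)) := by
    rw [← geom_sum_eq h1]; rw [Finset.mul_sum]; congr 1; ext k; ring
  rw [hsum, norm_mul, norm_div]
  have hxn : ‖x‖ = 1 := by simpa using hx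
  rw [hxn, one_mul]
  have h2 : ‖x ^ N - 1‖ ≤ 2 := by
    calc ‖x ^ N - 1‖ ≤ ‖x ^ N‖ + ‖(1:ℂ)‖ := norm_sub_le _ _
    _ = 2 := by rw [norm_pow, hxn]; norm_num
  have heq : ‖x - 1‖ = ‖1 - x‖ := by rw [← norm_neg]; ring_nf
  rw [heq]
  have hpos : 0 < ‖1 - x‖ := by rw [← heq]; exact norm_pos_iff.mpr hx1
  gcongr

lemma cmhzP_single (k : ℕ) (x b : ℂ) (N : ℕ) :
    cmhzP [(k, x, b)] N
      = ∑ j ∈ Finset.range N, x ^ (j + 1) / (((j + 1 : ℕ) : ℂ) + b - 1) ^ k := by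
  classical
  rw [cmhzP]
  have hfil : (Finset.univ.filter (fun n : Fin ([(k, x, b)].length) → Fin N => StrictMono n))
      = Finset.univ :=
    Finset.filter_true_of_mem (fun n _ => @Subsingleton.strictMono (Fin 1) _ _ _ _ n)
  rw [hfil]
  rw [← Fin.sum_univ_eq_sum_range (fun j => x ^ (j + 1) / (((j + 1 : ℕ) : ℂ) + b - 1) ^ k) N]
  exact Fintype.sum_equiv (Equiv.funUnique (Fin 1) (Fin N)) _ _ (fun n => by
    simp [Fin.prod_univ_one])

lemma li1_eq_limUnder (k : ℕ) (x : ℂ) :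
    li1 k x = limUnder atTop
      (fun N : ℕ => ∑ j ∈ Finset.range N, x ^ (j + 1) / (((j + 1 : ℕ) : ℂ)) ^ k) := by
  have : li1 k x = cmhz [(k, x, 1)] := by simp [li1, cmzv]
  rw [this, cmhz]
  congr 1
  funext N
  rw [cmhzP_single]
  congr 1; funext j; congr 2; push_cast; ring

lemma summable_one_div_nat_add_sq : Summable (fun j : ℕ => 1 / ((j + 1 : ℕ) : ℝ) ^ 2) := by
  have h := Real.summable_one_div_nat_pow.mpr (le_refl 2)
  have := (summable_nat_add_iff 1).mpr h
  simpa using this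

lemma summable_li1_terms {x : ℂ} (hx : ‖x‖ = 1) (m : ℕ) :
    Summable (fun j : ℕ => x ^ (j + 1) / (((j + 1 : ℕ) : ℂ)) ^ (m + 2)) := by
  apply Summable.of_norm_bounded summable_one_div_nat_add_sq
  intro j
  rw [norm_div, norm_pow, norm_pow]
  have hxn : ‖x‖ = 1 := by simpa using hx
  have hj : ‖((j + 1 : ℕ) : ℂ)‖ = ((j + 1 : ℕ) : ℝ) := by
    rw [Complex.norm_natCast]
  rw [hxn, one_pow, hj]
  have h1 : (1 : ℝ) ≤ ((j + 1 : ℕ) : ℝ) := by exact_mod_cast Nat.one_le_iff_ne_zero.mpr (Nat.succ_ne_zero j)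
  rw [div_le_div_iff₀ (by positivity) (by positivity)]
  calc (1 : ℝ) * ((j+1:ℕ):ℝ) ^ 2 = ((j+1:ℕ):ℝ) ^ 2 := by ring
  _ ≤ ((j+1:ℕ):ℝ) ^ (m + 2) := pow_le_pow_right₀ h1 (by omega)
  _ = 1 * ((j+1:ℕ):ℝ) ^ (m+2) := by ring

lemma li1_eq_tsum {x : ℂ} (hx : ‖x‖ = 1) (m : ℕ) :
    li1 (m + 2) x = ∑' j : ℕ, x ^ (j + 1) / (((j + 1 : ℕ) : ℂ)) ^ (m + 2) := by
  rw [li1_eq_limUnder]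
  exact ((summable_li1_terms hx m).hasSum.tendsto_sum_nat).limUnder_eq

lemma li1_bound {x : ℂ} (hx : ‖x‖ = 1) (m : ℕ) :
    ‖li1 (m + 2) x‖ ≤ ∑' j : ℕ, 1 / ((j + 1 : ℕ) : ℝ) ^ 2 := by
  rw [li1_eq_tsum hx m]
  refine (norm_tsum_le_tsum_norm ((summable_li1_terms hx m).norm)).trans ?_
  apply Summable.tsum_le_tsum _ ((summable_li1_terms hx m).norm) summable_one_div_nat_add_sq
  intro j
  rw [norm_div, norm_pow, norm_pow]
  have hxn : ‖x‖ = 1 := by simpa using hx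
  rw [hxn, one_pow, Complex.norm_natCast]
  have h1 : (1 : ℝ) ≤ ((j + 1 : ℕ) : ℝ) := by exact_mod_cast Nat.one_le_iff_ne_zero.mpr (Nat.succ_ne_zero j)
  rw [div_le_div_iff₀ (by positivity) (by positivity)]
  calc (1 : ℝ) * ((j+1:ℕ):ℝ) ^ 2 = ((j+1:ℕ):ℝ) ^ 2 := by ring
  _ ≤ ((j+1:ℕ):ℝ) ^ (m + 2) := pow_le_pow_right₀ h1 (by omega)
  _ = 1 * ((j+1:ℕ):ℝ) ^ (m+2) := by ring

lemma tendsto_li1_one {x : ℂ} (hx : IsRootOfUnity x) (h1 : x ≠ 1) :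
    Tendsto (fun N : ℕ => ∑ j ∈ Finset.range N, x ^ (j + 1) / ((j + 1 : ℕ) : ℂ))
      atTop (nhds (li1 1 x)) := by
  have key : CauchySeq (fun N : ℕ => ∑ j ∈ Finset.range N,
      (1 / ((j + 1 : ℕ) : ℝ)) • x ^ (j + 1)) := by
    apply Antitone.cauchySeq_series_mul_of_tendsto_zero_of_bounded
      (b := 2 / ‖1 - x‖) (f := fun j => 1 / ((j + 1 : ℕ) : ℝ))
    · intro a b hab
      apply div_le_div_of_nonneg_left (by norm_num) (by positivity)
      exact_mod_cast Nat.succ_le_succ hab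
    · have : Tendsto (fun j : ℕ => 1 / ((j : ℝ) + 1)) atTop (nhds 0) :=
        tendsto_one_div_add_atTop_nhds_zero_nat
      simpa using this
    · exact geom_bound (rou_abs hx) h1
  have heqf : (fun N : ℕ => ∑ j ∈ Finset.range N, (1 / ((j + 1 : ℕ) : ℝ)) • x ^ (j + 1))
      = (fun N : ℕ => ∑ j ∈ Finset.range N, x ^ (j + 1) / ((j + 1 : ℕ) : ℂ)) := by
    funext N; congr 1; funext j
    rw [← Complex.coe_smul, smul_eq_mul]
    push_cast; ring
  rw [heqf] at key
  obtain ⟨L, hL⟩ := cauchySeq_tendsto_of_complete key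
  have : li1 1 x = L := by rw [li1_eq_limUnder]; simp only [pow_one]; exact hL.limUnder_eq
  rw [this]; exact hL

end Aux

section Phi

lemma term_split (x c s : ℂ) (hc : c ≠ 0) :
    x / (c + s) = x / c + x * (1 / (c + s) - 1 / c) := by
  by_cases hd : c + s = 0
  · rw [hd, div_zero, div_zero]; ring
  · field_simp; ring

lemma summable_phi_tail (x s : ℂ) (hx : ‖x‖ = 1) :
    Summable (fun k : ℕ => x ^ (k + 1) *
      (1 / (((k + 1 : ℕ) : ℂ) + s) - 1 / ((k + 1 : ℕ) : ℂ))) := by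
  apply Summable.of_norm_bounded_eventually_nat
    (g := fun k => 2 * ‖s‖ * (1 / ((k + 1 : ℕ) : ℝ) ^ 2))
    (summable_one_div_nat_add_sq.mul_left _)
  have hxn : ‖x‖ = 1 := by simpa using hx
  rw [Filter.eventually_atTop]
  refine ⟨⌈2 * ‖s‖⌉₊, fun k hk => ?_⟩
  have hcs : 2 * ‖s‖ ≤ ((k : ℝ) + 1) := by
    have := Nat.ceil_le.mp (le_refl ⌈2 * ‖s‖⌉₊)
    have hk' : (⌈2 * ‖s‖⌉₊ : ℝ) ≤ (k : ℝ) := by exact_mod_cast hk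
    linarith [Nat.le_ceil (2 * ‖s‖)]
  have hcpos : (0 : ℝ) < ((k : ℝ) + 1) := by positivity
  set c : ℂ := ((k + 1 : ℕ) : ℂ) with hc
  have hcabs : ‖c‖ = (k : ℝ) + 1 := by
    rw [hc]; rw [Complex.norm_natCast]; push_cast; ring
  have hcne : c ≠ 0 := by
    intro h; rw [h, norm_zero] at hcabs; linarith
  have hdabs : ((k : ℝ) + 1) / 2 ≤ ‖c + s‖ := by
    have htri : ‖c‖ ≤ ‖c + s‖ + ‖s‖ := by
      calc ‖c‖ = ‖(c + s) + (-s)‖ := by congr 1; ring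
      _ ≤ ‖c + s‖ + ‖-s‖ := norm_add_le _ _
      _ = ‖c + s‖ + ‖s‖ := by rw [norm_neg]
    rw [hcabs] at htri; linarith
  have hdne : c + s ≠ 0 := by
    intro h; rw [h, norm_zero] at hdabs; linarith
  have hsplit : 1 / (c + s) - 1 / c = -s / ((c + s) * c) := by field_simp; ring
  rw [norm_mul, norm_pow, hxn, one_pow, one_mul, hsplit, norm_div, norm_mul, norm_neg]
  have h2 : ‖c + s‖ * ‖c‖ ≥ (((k : ℝ) + 1) / 2) * ((k : ℝ) + 1) := by
    have hc1 : ‖c‖ = (k : ℝ) + 1 := by rw [hcabs]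
    have hd1 : ‖c + s‖ ≥ ((k : ℝ) + 1) / 2 := by exact hdabs
    rw [hc1]
    exact mul_le_mul_of_nonneg_right hd1 (by positivity)
  have hnum : ‖s‖ = ‖s‖ := rfl
  rw [hnum]
  have hden : (0 : ℝ) < (((k : ℝ) + 1) / 2) * ((k : ℝ) + 1) := by positivity
  have hk1 : ((k + 1 : ℕ) : ℝ) = (k : ℝ) + 1 := by push_cast; ring
  rw [hk1]
  calc ‖s‖ / (‖c + s‖ * ‖c‖) ≤ ‖s‖ / ((((k : ℝ) + 1) / 2) * ((k : ℝ) + 1)) := by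
        apply div_le_div_of_nonneg_left (norm_nonneg s) hden h2 |>.trans (le_refl _)
  _ = 2 * ‖s‖ * (1 / ((k : ℝ) + 1) ^ 2) := by field_simp

lemma phi_eq {x : ℂ} (hx : IsRootOfUnity x) (h1 : x ≠ 1) (s : ℂ) :
    phiF s x = 1 / s + (li1 1 x + ∑' k : ℕ, x ^ (k + 1) *
      (1 / (((k + 1 : ℕ) : ℂ) + s) - 1 / ((k + 1 : ℕ) : ℂ))) ∧
    Tendsto (fun N : ℕ => ∑ t ∈ Finset.range (N + 1), x ^ t / ((t : ℂ) + s)) atTop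
      (nhds (phiF s x)) := by
  have habs := rou_abs hx
  have hterm : ∀ k : ℕ, x ^ (k + 1) / (((k + 1 : ℕ) : ℂ) + s)
      = x ^ (k + 1) / ((k + 1 : ℕ) : ℂ) + x ^ (k + 1) *
        (1 / (((k + 1 : ℕ) : ℂ) + s) - 1 / ((k + 1 : ℕ) : ℂ)) := by
    intro k
    apply term_split
    exact Nat.cast_ne_zero.mpr (Nat.succ_ne_zero k)
  have htend : Tendsto (fun N : ℕ => ∑ t ∈ Finset.range (N + 1), x ^ t / ((t : ℂ) + s)) atTop
      (nhds (1 / s + (li1 1 x + ∑' k : ℕ, x ^ (k + 1) *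
        (1 / (((k + 1 : ℕ) : ℂ) + s) - 1 / ((k + 1 : ℕ) : ℂ))))) := by
    have hre : ∀ N : ℕ, ∑ t ∈ Finset.range (N + 1), x ^ t / ((t : ℂ) + s)
        = 1 / s + (∑ k ∈ Finset.range N, x ^ (k + 1) / ((k + 1 : ℕ) : ℂ)
          + ∑ k ∈ Finset.range N, x ^ (k + 1) *
            (1 / (((k + 1 : ℕ) : ℂ) + s) - 1 / ((k + 1 : ℕ) : ℂ))) := by
      intro N
      rw [Finset.sum_range_succ']
      rw [← Finset.sum_add_distrib]
      have h0 : x ^ 0 / ((0 : ℕ) + s : ℂ) = 1 / s := by norm_num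
      rw [h0, add_comm]
      congr 1
      apply Finset.sum_congr rfl
      intro k _
      exact hterm k
    simp only [hre]
    apply Tendsto.const_add
    exact ((tendsto_li1_one hx h1).add
      ((summable_phi_tail x s habs).hasSum.tendsto_sum_nat))
  have hval : phiF s x = 1 / s + (li1 1 x + ∑' k : ℕ, x ^ (k + 1) *
      (1 / (((k + 1 : ℕ) : ℂ) + s) - 1 / ((k + 1 : ℕ) : ℂ))) := by
    unfold phiF; exact htend.limUnder_eq
  exact ⟨hval, hval ▸ htend⟩

end Phi

section Shift

lemma phi_shift {x : ℂ} (hx : IsRootOfUnity x) (hx1 : x ≠ 1) (s : ℂ) :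
    phiF (s + 1) x = x⁻¹ * (phiF s x - 1 / s) := by
  have hx0 := rou_ne_zero hx
  have hP := (phi_eq hx hx1 s).2
  have hident : ∀ N : ℕ, ∑ t ∈ Finset.range (N + 1), x ^ t / ((t : ℂ) + (s + 1))
      = x⁻¹ * ((∑ t ∈ Finset.range (N + 1 + 1), x ^ t / ((t : ℂ) + s)) - 1 / s) := by
    intro N
    rw [Finset.sum_range_succ' (fun t => x ^ t / ((t : ℂ) + s)) (N + 1)]
    have h0 : x ^ 0 / ((0 : ℕ) + s : ℂ) = 1 / s := by norm_num
    rw [h0, add_sub_cancel_right, Finset.mul_sum]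
    apply Finset.sum_congr rfl
    intro t _
    have : x⁻¹ * (x ^ (t + 1) / (((t + 1 : ℕ) : ℂ) + s)) = x ^ t / (((t + 1 : ℕ) : ℂ) + s) := by
      rw [pow_succ]; field_simp
    rw [this]
    congr 1
    push_cast; ring
  have htend : Tendsto (fun N : ℕ => ∑ t ∈ Finset.range (N + 1), x ^ t / ((t : ℂ) + (s + 1)))
      atTop (nhds (x⁻¹ * (phiF s x - 1 / s))) := by
    simp only [hident]
    exact (((hP.comp (tendsto_add_atTop_nat 1)).sub tendsto_const_nhds).const_mul x⁻¹)
  unfold phiF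
  exact htend.limUnder_eq

lemma phi_shift_neg {x : ℂ} (hx : IsRootOfUnity x) (hx1 : x ≠ 1) (s : ℂ) :
    phiF (-(s + 1)) x⁻¹ = -(1 / (s + 1)) + x⁻¹ * phiF (-s) x⁻¹ := by
  have hy : IsRootOfUnity x⁻¹ := rou_inv hx
  have hy1 : x⁻¹ ≠ 1 := rou_inv_ne_one hx hx1
  have hQ := (phi_eq hy hy1 (-s)).2
  have hQ' := (phi_eq hy hy1 (-(s + 1))).2
  have hident : ∀ N : ℕ, ∑ t ∈ Finset.range (N + 1 + 1), (x⁻¹) ^ t / ((t : ℂ) + -(s + 1))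
      = -(1 / (s + 1)) + x⁻¹ * ∑ t ∈ Finset.range (N + 1), (x⁻¹) ^ t / ((t : ℂ) + -s) := by
    intro N
    rw [Finset.sum_range_succ' (fun t => (x⁻¹) ^ t / ((t : ℂ) + -(s + 1))) (N + 1)]
    have h0 : (x⁻¹) ^ 0 / (((0 : ℕ) : ℂ) + -(s + 1)) = -(1 / (s + 1)) := by
      simp
      rw [← inv_neg]
      congr 1
      ring
    rw [h0, add_comm, Finset.mul_sum]
    congr 1
    apply Finset.sum_congr rfl
    intro t _
    rw [pow_succ, mul_comm ((x⁻¹) ^ t) x⁻¹, mul_div_assoc]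
    congr 2
    push_cast; ring
  have htend : Tendsto (fun N : ℕ =>
      ∑ t ∈ Finset.range (N + 1 + 1), (x⁻¹) ^ t / ((t : ℂ) + -(s + 1))) atTop
      (nhds (-(1 / (s + 1)) + x⁻¹ * phiF (-s) x⁻¹)) := by
    simp only [hident]
    exact tendsto_const_nhds.add (hQ.const_mul x⁻¹)
  have htend2 := hQ'.comp (tendsto_add_atTop_nat 1)
  exact tendsto_nhds_unique htend2 htend

lemma PhiF_shift {x : ℂ} (hx : IsRootOfUnity x) (hx1 : x ≠ 1) (s : ℂ) :
    PhiF (s + 1) x = x⁻¹ * PhiF s x := by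
  unfold PhiF
  rw [phi_shift hx hx1 s, phi_shift_neg hx hx1 s]
  ring

lemma PhiF_shift_int {x : ℂ} (hx : IsRootOfUnity x) (hx1 : x ≠ 1) (w : ℂ) (n : ℤ) :
    PhiF (w + (n : ℂ)) x = x ^ (-n) * PhiF w x := by
  have hx0 := rou_ne_zero hx
  induction n using Int.induction_on with
  | zero => simp
  | succ k ih =>
      have h1 : w + ((k : ℤ) + 1 : ℤ) = (w + (k : ℤ)) + 1 := by push_cast; ring
      rw [h1, PhiF_shift hx hx1, ih]
      rw [← mul_assoc]
      congr 1
      rw [← zpow_neg_one, ← zpow_add₀ hx0]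
      congr 1
      ring
  | pred k ih =>
      rw [show w + ((-(k:ℤ) : ℤ) : ℂ) = (w + ((-(k : ℤ) - 1 : ℤ) : ℂ)) + 1 by push_cast; ring,
        PhiF_shift hx hx1] at ih
      have h2 : PhiF (w + ((-(k : ℤ) - 1 : ℤ) : ℂ)) x = x * (x ^ (-(-(k:ℤ))) * PhiF w x) := by
        rw [← ih]; field_simp
      rw [h2, ← mul_assoc]
      congr 1
      rw [show (-(-(k:ℤ) - 1)) = 1 + (- -(k:ℤ)) by ring, zpow_add₀ hx0, zpow_one]

end Shift

section Expansion

lemma summable_tailpow {y w : ℂ} (hy : ‖y‖ = 1) (hw : ‖w‖ < 1) :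
    Summable (fun m : ℕ => (-1 : ℂ) ^ (m + 1) * w ^ (m + 1) * li1 (m + 2) y) := by
  set Czeta : ℝ := ∑' j : ℕ, 1 / ((j + 1 : ℕ) : ℝ) ^ 2 with hC_def
  have hC : 0 ≤ Czeta := tsum_nonneg (fun j => by positivity)
  apply Summable.of_norm_bounded (g := fun m => (Czeta * ‖w‖) * (‖w‖) ^ m)
    (((summable_geometric_of_lt_one (norm_nonneg w) hw).mul_left _))
  intro m
  rw [norm_mul, norm_mul, norm_pow, norm_pow]
  have h1 : ‖(-1 : ℂ)‖ = 1 := by simp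
  rw [h1, one_pow, one_mul]
  have h2 : ‖w‖ = ‖w‖ := rfl
  rw [h2]
  have h3 := li1_bound hy m
  calc ‖w‖ ^ (m + 1) * ‖li1 (m + 2) y‖
      ≤ ‖w‖ ^ (m + 1) * Czeta := by
        apply mul_le_mul_of_nonneg_left h3 (by positivity)
  _ = Czeta * ‖w‖ * ‖w‖ ^ m := by rw [pow_succ]; ring

lemma row_eval (y c w : ℂ) (hc : 1 ≤ ‖c‖) (hw : ‖w‖ < 1) :
    Summable (fun m : ℕ => y * ((-1 : ℂ) ^ (m + 1) * w ^ (m + 1) / c ^ (m + 2))) ∧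
    ∑' m : ℕ, y * ((-1 : ℂ) ^ (m + 1) * w ^ (m + 1) / c ^ (m + 2))
      = y * (1 / (c + w) - 1 / c) := by
  have hcne : c ≠ 0 := by
    intro h; rw [h, norm_zero] at hc; linarith
  have hrabs : ‖-w / c‖ < 1 := by
    rw [norm_div, norm_neg]
    have habsc : ‖c‖ = ‖c‖ := rfl
    have hwn : ‖w‖ = ‖w‖ := rfl
    calc ‖w‖ / ‖c‖ ≤ ‖w‖ / 1 := by
          apply div_le_div_of_nonneg_left (norm_nonneg w) one_pos
          rw [habsc]; exact hc
    _ = ‖w‖ := div_one _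
    _ < 1 := hw
  have hcw : c + w ≠ 0 := by
    intro h
    have h2 : ‖c + w‖ = 0 := by rw [h, norm_zero]
    have htri : ‖c‖ ≤ ‖c + w‖ + ‖w‖ := by
      calc ‖c‖ = ‖(c + w) + (-w)‖ := by congr 1; ring
      _ ≤ ‖c + w‖ + ‖-w‖ := norm_add_le _ _
      _ = ‖c + w‖ + ‖w‖ := by rw [norm_neg]
    rw [h2] at htri; linarith
  have h1r : (1 : ℂ) - (-w / c) ≠ 0 := by
    intro h
    have h2 : ‖(1 : ℂ) - (-w / c)‖ = 0 := by rw [h, norm_zero]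
    have h3 : (1 : ℝ) - ‖-w / c‖ ≤ ‖(1 : ℂ) - (-w / c)‖ := by
      have := norm_sub_norm_le (1 : ℂ) (-w / c)
      simpa using this
    rw [h2] at h3; linarith
  have hFr : ∀ m : ℕ, y * ((-1 : ℂ) ^ (m + 1) * w ^ (m + 1) / c ^ (m + 2))
      = (y / c) * (-w / c) ^ (m + 1) := by
    intro m
    rw [div_pow, neg_pow w]
    rw [div_mul_div_comm, ← pow_succ']
    ring
  constructor
  · apply Summable.congr (f := fun m => (y / c) * (-w / c) ^ (m + 1))
    · apply Summable.mul_left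
      apply Summable.congr (f := fun m => (-w / c) * (-w / c) ^ m)
      · exact (summable_geometric_of_norm_lt_one hrabs).mul_left _
      · intro m; rw [← pow_succ']
    · intro m; exact (hFr m).symm
  · calc ∑' m : ℕ, y * ((-1 : ℂ) ^ (m + 1) * w ^ (m + 1) / c ^ (m + 2))
        = ∑' m : ℕ, (y / c) * (-w / c) ^ (m + 1) := tsum_congr hFr
    _ = (y / c) * ∑' m : ℕ, (-w / c) ^ (m + 1) := tsum_mul_left
    _ = (y / c) * ∑' m : ℕ, (-w / c) * (-w / c) ^ m := by
        congr 1; exact tsum_congr (fun m => by rw [← pow_succ'])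
    _ = (y / c) * ((-w / c) * (1 - (-w / c))⁻¹) := by
        rw [tsum_mul_left, tsum_geometric_of_norm_lt_one hrabs]
    _ = y * (1 / (c + w) - 1 / c) := by
        have hwc : w + c ≠ 0 := by rwa [add_comm]
        field_simp
        linear_combination (-(y * w)) * inv_mul_cancel₀ hwc

lemma abs_nat_succ_ge_one (k : ℕ) : 1 ≤ ‖((k + 1 : ℕ) : ℂ)‖ := by
  rw [Complex.norm_natCast]
  exact_mod_cast Nat.one_le_iff_ne_zero.mpr (Nat.succ_ne_zero k)

lemma tail_expansion {y w : ℂ} (hy : ‖y‖ = 1) (hw : ‖w‖ < 1) :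
    ∑' k : ℕ, y ^ (k + 1) * (1 / (((k + 1 : ℕ) : ℂ) + w) - 1 / ((k + 1 : ℕ) : ℂ))
      = ∑' m : ℕ, (-1 : ℂ) ^ (m + 1) * w ^ (m + 1) * li1 (m + 2) y := by
  set F : ℕ → ℕ → ℂ := fun k m =>
    y ^ (k + 1) * ((-1 : ℂ) ^ (m + 1) * w ^ (m + 1) / (((k + 1 : ℕ) : ℂ)) ^ (m + 2)) with hF_def
  have hyn : ‖y‖ = 1 := by simpa using hy
  have hk1 : ∀ k : ℕ, (1 : ℝ) ≤ (k : ℝ) + 1 := by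
    intro k
    have : (0 : ℝ) ≤ (k : ℝ) := Nat.cast_nonneg k
    linarith
  have hFnorm : ∀ k m : ℕ, ‖F k m‖ = ‖w‖ ^ (m + 1) / ((k : ℝ) + 1) ^ (m + 2) := by
    intro k m
    rw [hF_def]
    simp only [norm_mul, norm_div, norm_pow, hyn, one_pow, one_mul]
    have h1 : ‖(-1 : ℂ)‖ = 1 := by simp
    have h2 : ‖((k + 1 : ℕ) : ℂ)‖ = ((k : ℝ) + 1) := by
      rw [Complex.norm_natCast]; push_cast; ring
    rw [h1, one_pow, one_mul, h2]
  have hG : Summable (fun p : ℕ × ℕ =>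
      (1 / ((p.1 : ℝ) + 1) ^ 2) * (‖w‖ * ‖w‖ ^ p.2)) := by
    apply summable_mul_of_summable_norm (f := fun k : ℕ => 1 / ((k : ℝ) + 1) ^ 2)
      (g := fun m : ℕ => ‖w‖ * ‖w‖ ^ m)
    · apply Summable.congr (f := fun k : ℕ => 1 / ((k : ℝ) + 1) ^ 2)
      · apply summable_one_div_nat_add_sq.congr
        intro k; push_cast; ring
      · intro k; rw [Real.norm_of_nonneg (by positivity)]
    · apply Summable.congr (f := fun m : ℕ => ‖w‖ * ‖w‖ ^ m)
      · exact (summable_geometric_of_lt_one (norm_nonneg w) hw).mul_left _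
      · intro m; rw [Real.norm_of_nonneg (by positivity)]
  have hF : Summable (Function.uncurry F) := by
    apply Summable.of_norm_bounded hG
    intro p
    rw [Function.uncurry, hFnorm p.1 p.2]
    have hle : ((p.1 : ℝ) + 1) ^ 2 ≤ ((p.1 : ℝ) + 1) ^ (p.2 + 2) :=
      pow_le_pow_right₀ (hk1 p.1) (by omega)
    have heq : 1 / ((p.1 : ℝ) + 1) ^ 2 * (‖w‖ * ‖w‖ ^ p.2)
        = ‖w‖ ^ (p.2 + 1) / ((p.1 : ℝ) + 1) ^ 2 := by
      rw [pow_succ]; ring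
    rw [heq]
    exact div_le_div_of_nonneg_left (by positivity) (by positivity) hle
  have hrow : ∀ k : ℕ, Summable (F k) := fun k =>
    (row_eval (y ^ (k + 1)) _ w (abs_nat_succ_ge_one k) hw).1
  have hcol : ∀ m : ℕ, Summable (fun k => F k m) := by
    intro m
    apply Summable.congr
      (f := fun k => ((-1 : ℂ) ^ (m + 1) * w ^ (m + 1)) *
        (y ^ (k + 1) / (((k + 1 : ℕ) : ℂ)) ^ (m + 2)))
    · exact (summable_li1_terms hy m).mul_left _
    · intro k; rw [hF_def]; ring
  have hinner : ∀ k : ℕ, ∑' m : ℕ, F k m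
      = y ^ (k + 1) * (1 / (((k + 1 : ℕ) : ℂ) + w) - 1 / ((k + 1 : ℕ) : ℂ)) := fun k =>
    (row_eval (y ^ (k + 1)) _ w (abs_nat_succ_ge_one k) hw).2
  have houter : ∀ m : ℕ, ∑' k : ℕ, F k m
      = (-1 : ℂ) ^ (m + 1) * w ^ (m + 1) * li1 (m + 2) y := by
    intro m
    calc ∑' k : ℕ, F k m
        = ∑' k : ℕ, ((-1 : ℂ) ^ (m + 1) * w ^ (m + 1)) *
            (y ^ (k + 1) / (((k + 1 : ℕ) : ℂ)) ^ (m + 2)) := tsum_congr (fun k => by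
          rw [hF_def]; ring)
    _ = ((-1 : ℂ) ^ (m + 1) * w ^ (m + 1)) *
          ∑' k : ℕ, y ^ (k + 1) / (((k + 1 : ℕ) : ℂ)) ^ (m + 2) := tsum_mul_left
    _ = (-1 : ℂ) ^ (m + 1) * w ^ (m + 1) * li1 (m + 2) y := by
          rw [← li1_eq_tsum hy m]
  calc ∑' k : ℕ, y ^ (k + 1) * (1 / (((k + 1 : ℕ) : ℂ) + w) - 1 / ((k + 1 : ℕ) : ℂ))
      = ∑' k : ℕ, ∑' m : ℕ, F k m := tsum_congr (fun k => (hinner k).symm)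
  _ = ∑' m : ℕ, ∑' k : ℕ, F k m := (Summable.tsum_comm' hF hrow hcol).symm
  _ = ∑' m : ℕ, (-1 : ℂ) ^ (m + 1) * w ^ (m + 1) * li1 (m + 2) y := tsum_congr houter

lemma PhiF_expansion_zero {x w : ℂ} (hx : IsRootOfUnity x) (hx1 : x ≠ 1)
    (hw : ‖w‖ < 1) :
    Summable (fun m : ℕ => ((-1 : ℂ) ^ m * li1 (m + 1) x - li1 (m + 1) x⁻¹) * w ^ m) ∧
    PhiF w x = 1 / w
      + ∑' m : ℕ, ((-1 : ℂ) ^ m * li1 (m + 1) x - li1 (m + 1) x⁻¹) * w ^ m := by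
  have habs := rou_abs hx
  have habs' : ‖x⁻¹‖ = 1 := by rw [norm_inv, habs, inv_one]
  have hnegw : ‖-w‖ < 1 := by rwa [norm_neg]
  have hA : Summable (fun m : ℕ => (-1 : ℂ) ^ (m + 1) * w ^ (m + 1) * li1 (m + 2) x) :=
    summable_tailpow habs hw
  have hBcongr : ∀ m : ℕ, (-1 : ℂ) ^ (m + 1) * (-w) ^ (m + 1) * li1 (m + 2) x⁻¹
      = w ^ (m + 1) * li1 (m + 2) x⁻¹ := by
    intro m
    rw [← mul_pow]
    norm_num
  have hB : Summable (fun m : ℕ => w ^ (m + 1) * li1 (m + 2) x⁻¹) :=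
    (summable_tailpow habs' hnegw).congr hBcongr
  set b : ℕ → ℂ := fun m => ((-1 : ℂ) ^ m * li1 (m + 1) x - li1 (m + 1) x⁻¹) * w ^ m with hb_def
  have hbtail : ∀ m : ℕ, b (m + 1)
      = (-1 : ℂ) ^ (m + 1) * w ^ (m + 1) * li1 (m + 2) x
        - w ^ (m + 1) * li1 (m + 2) x⁻¹ := by
    intro m; rw [hb_def]; ring
  have hbt : Summable (fun m => b (m + 1)) := by
    apply (hA.sub hB).congr
    intro m; exact (hbtail m).symm
  have hb : Summable b := (summable_nat_add_iff 1).mp hbt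
  refine ⟨hb, ?_⟩
  have h1 := (phi_eq hx hx1 w).1
  have h2 := (phi_eq (rou_inv hx) (rou_inv_ne_one hx hx1) (-w)).1
  rw [tail_expansion habs hw] at h1
  rw [tail_expansion habs' hnegw] at h2
  have h2' : phiF (-w) x⁻¹ = 1 / (-w)
      + (li1 1 x⁻¹ + ∑' m : ℕ, w ^ (m + 1) * li1 (m + 2) x⁻¹) := by
    rw [h2]
    congr 2
    exact tsum_congr hBcongr
  have hbsum : ∑' m, b m = (li1 1 x - li1 1 x⁻¹)
      + ((∑' m : ℕ, (-1 : ℂ) ^ (m + 1) * w ^ (m + 1) * li1 (m + 2) x)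
        - ∑' m : ℕ, w ^ (m + 1) * li1 (m + 2) x⁻¹) := by
    rw [Summable.tsum_eq_zero_add hb]
    congr 1
    · rw [hb_def]; norm_num
    · rw [← Summable.tsum_sub hA hB]
      exact tsum_congr hbtail
  rw [PhiF, h1, h2', hbsum]
  have hnw : 1 / (-w) = -(1 / w) := by
    rw [div_neg]
  rw [hnw]
  ring

end Expansion


/-- Laurent expansion of `Φ(s; x)` around an integer `n` (Lemma `lem-rui-xu-one`). -/
theorem PhiF_laurent_expansion_at_int (x : ℂ) (hx : IsRootOfUnity x) (hx1 : x ≠ 1)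
    (n : ℤ) (s : ℂ) (h1 : 0 < ‖s - (n : ℂ)‖) (h2 : ‖s - (n : ℂ)‖ < 1) :
    Summable (fun m : ℕ =>
      ((-1 : ℂ) ^ m * li1 (m + 1) x - li1 (m + 1) x⁻¹) * (s - (n : ℂ)) ^ m) ∧
    PhiF s x = x ^ (-n) *
      (1 / (s - (n : ℂ)) + ∑' m : ℕ,
        ((-1 : ℂ) ^ m * li1 (m + 1) x - li1 (m + 1) x⁻¹) * (s - (n : ℂ)) ^ m) := by
  have hexp := PhiF_expansion_zero hx hx1 h2
  refine ⟨hexp.1, ?_⟩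
  have hshift := PhiF_shift_int hx hx1 (s - (n : ℂ)) n
  calc PhiF s x = PhiF ((s - (n : ℂ)) + (n : ℂ)) x := by norm_num
  _ = x ^ (-n) * PhiF (s - (n : ℂ)) x := hshift
  _ = x ^ (-n) * (1 / (s - (n : ℂ)) + ∑' m : ℕ,
        ((-1 : ℂ) ^ m * li1 (m + 1) x - li1 (m + 1) x⁻¹) * (s - (n : ℂ)) ^ m) := by
      rw [hexp.2]
end

section
/- Let x be a root of unity with x ≠ 1, let n ≥ 0 be an integer, and let a ∈ ℂ∖ℤ. Then for every s ∈ ℂ with 0 < |s + n + a| < |a − m| for every integer m, the series Σ_{m=0}^{∞} ((−1)^m Li_{m+1}(x; 1−a) − x Li_{m+1}(x^{−1}; a)) (s+n+a)^m converges and Φ(s; x) = x^n Σ_{m=0}^{∞} ((−1)^m Li_{m+1}(x; 1−a) − x Li_{m+1}(x^{−1}; a)) (s+n+a)^m. -/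
open Filter Finset

/-! ### Auxiliary lemmas -/

open Topology

section MyAux

lemma my_geom_partial_bound {x : ℂ} (hnorm : ‖x‖ = 1) (hx1 : x ≠ 1) (K : ℕ) :
    ‖∑ k ∈ range K, x ^ k‖ ≤ 2 / ‖1 - x‖ := by
  have hx1' : x - 1 ≠ 0 := sub_ne_zero.mpr hx1
  have hpos : 0 < ‖x - 1‖ := norm_pos_iff.mpr hx1'
  rw [geom_sum_eq hx1, norm_div]
  rw [show ‖(1:ℂ) - x‖ = ‖x - 1‖ from norm_sub_rev _ _]
  gcongr
  calc ‖x ^ K - 1‖ ≤ ‖x ^ K‖ + ‖(1:ℂ)‖ := norm_sub_le _ _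
    _ = 2 := by rw [norm_pow, hnorm]; norm_num

lemma my_natAdd_norm_tendsto (c : ℂ) :
    Tendsto (fun N : ℕ => ‖(N : ℂ) + c‖) atTop atTop := by
  apply tendsto_atTop_mono (fun N => ?_)
    (tendsto_atTop_add_const_right atTop (-‖c‖) tendsto_natCast_atTop_atTop)
  have h := norm_sub_norm_le ((N : ℂ)) (-c)
  rw [sub_neg_eq_add, norm_neg] at h
  simpa using h

lemma my_inv_tendsto (c : ℂ) :
    Tendsto (fun N : ℕ => ((N : ℂ) + c)⁻¹) atTop (𝓝 0) := by
  rw [tendsto_zero_iff_norm_tendsto_zero]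
  simpa [norm_inv, Pi.inv_def] using (my_natAdd_norm_tendsto c).inv_tendsto_atTop

lemma my_dirichlet {x : ℂ} (hnorm : ‖x‖ = 1) (hx1 : x ≠ 1) (c : ℂ)
    (hc : ∀ k : ℕ, ((k : ℂ) + c) ≠ 0) :
    ∃ L : ℂ, Tendsto (fun N : ℕ => ∑ t ∈ range N, x ^ t / ((t : ℂ) + c)) atTop (𝓝 L) := by
  set C : ℝ := 2 / ‖1 - x‖ with hC
  have hCnn : 0 ≤ C := div_nonneg (by norm_num) (norm_nonneg _)
  set G : ℕ → ℂ := fun K => ∑ k ∈ range K, x ^ k with hG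
  have hGb : ∀ K, ‖G K‖ ≤ C := my_geom_partial_bound hnorm hx1
  set f : ℕ → ℂ := fun i => ((i : ℂ) + c)⁻¹ with hf
  set h : ℕ → ℂ := fun i => (f (i + 1) - f i) * G (i + 1) with hh
  have hsum : Summable h := by
    apply Summable.of_norm_bounded_eventually_nat (g := fun i => 4 * C / (i : ℝ) ^ 2)
    · have := (Real.summable_one_div_nat_pow.mpr (show 1 < 2 by norm_num)).mul_left (4 * C)
      apply this.congr
      intro i
      rw [mul_one_div]
    · filter_upwards [eventually_ge_atTop (⌈2 * ‖c‖ + 2⌉₊)] with i hi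
      have hi' : 2 * ‖c‖ + 2 ≤ (i : ℝ) := le_trans (Nat.le_ceil _) (by exact_mod_cast Nat.cast_le.mpr hi)
      have hipos : (0 : ℝ) < (i : ℝ) := by nlinarith [norm_nonneg c]
      have hna : (i : ℝ) / 2 ≤ ‖(i : ℂ) + c‖ := by
        have h1 := norm_sub_norm_le ((i : ℂ)) (-c)
        rw [sub_neg_eq_add, norm_neg, Complex.norm_natCast] at h1
        nlinarith [norm_nonneg c]
      have hnb : (i : ℝ) / 2 ≤ ‖((i : ℕ) + 1 : ℂ) + c‖ := by
        have h1 := norm_sub_norm_le (((i : ℕ) : ℂ) + 1) (-c)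
        rw [sub_neg_eq_add, norm_neg] at h1
        have h2 : ‖((i : ℕ) : ℂ) + 1‖ = (i : ℝ) + 1 := by
          rw [show ((i : ℕ) : ℂ) + 1 = (((i + 1 : ℕ) : ℕ) : ℂ) by push_cast; ring,
            Complex.norm_natCast]
          push_cast; ring
        rw [h2] at h1
        nlinarith [norm_nonneg c]
      have hfd : f (i + 1) - f i = (-1) / ((((i + 1 : ℕ) : ℂ) + c) * (((i : ℕ) : ℂ) + c)) := by
        rw [hf]
        rw [inv_sub_inv (hc (i + 1)) (hc i)]
        congr 1
        push_cast; ring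
      have hpos2 : (0 : ℝ) < (i : ℝ) / 2 := by nlinarith [norm_nonneg c]
      have hnormfd : ‖f (i + 1) - f i‖ ≤ 4 / (i : ℝ) ^ 2 := by
        rw [hfd, norm_div, norm_mul, norm_neg, norm_one]
        have hcast : ‖(((i + 1 : ℕ) : ℂ) + c)‖ = ‖((i : ℕ) + 1 : ℂ) + c‖ := by push_cast; ring_nf
        rw [hcast]
        have hprod : (i : ℝ) / 2 * ((i : ℝ) / 2) ≤ ‖((i : ℕ) + 1 : ℂ) + c‖ * ‖((i : ℕ) : ℂ) + c‖ := by
          apply mul_le_mul hnb hna (le_of_lt hpos2) (norm_nonneg _)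
        calc 1 / (‖((i : ℕ) + 1 : ℂ) + c‖ * ‖((i : ℕ) : ℂ) + c‖)
            ≤ 1 / ((i : ℝ) / 2 * ((i : ℝ) / 2)) := by
              apply one_div_le_one_div_of_le (by positivity) hprod
          _ = 4 / (i : ℝ) ^ 2 := by field_simp; ring
      calc ‖h i‖ = ‖f (i + 1) - f i‖ * ‖G (i + 1)‖ := norm_mul _ _
        _ ≤ (4 / (i : ℝ) ^ 2) * C := by
            apply mul_le_mul hnormfd (hGb _) (norm_nonneg _) (by positivity)
        _ = 4 * C / (i : ℝ) ^ 2 := by ring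
  have key : ∀ N : ℕ, ∑ t ∈ range N, x ^ t / ((t : ℂ) + c)
      = f (N - 1) * G N - ∑ i ∈ range (N - 1), h i := by
    intro N
    have hby := Finset.sum_range_by_parts f (fun i => x ^ i) N
    simp only [smul_eq_mul] at hby
    rw [show (∑ t ∈ range N, x ^ t / ((t : ℂ) + c)) = ∑ i ∈ range N, f i * x ^ i by
      apply Finset.sum_congr rfl; intro i _; rw [hf, div_eq_mul_inv, mul_comm]]
    rw [hby]
  have t1 : Tendsto (fun N : ℕ => f (N - 1) * G N) atTop (𝓝 0) := by
    have hg0 : Tendsto (fun N : ℕ => ‖f (N - 1)‖ * C) atTop (𝓝 0) := by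
      have h0 : Tendsto (fun N : ℕ => ‖f N‖) atTop (𝓝 0) := by
        simpa [hf, norm_inv] using (my_inv_tendsto c).norm
      simpa using (h0.comp (tendsto_sub_atTop_nat 1)).mul_const C
    apply squeeze_zero_norm (fun N => ?_) hg0
    rw [norm_mul]
    exact mul_le_mul_of_nonneg_left (hGb N) (norm_nonneg _)
  have t2 : Tendsto (fun N : ℕ => ∑ i ∈ range (N - 1), h i) atTop (𝓝 (∑' i, h i)) :=
    (hsum.hasSum.tendsto_sum_nat).comp (tendsto_sub_atTop_nat 1)
  exact ⟨0 - ∑' i, h i, (t1.sub t2).congr (fun N => (key N).symm)⟩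

lemma my_phiF_tendsto {x : ℂ} (hnorm : ‖x‖ = 1) (hx1 : x ≠ 1) (c : ℂ)
    (hc : ∀ k : ℕ, ((k : ℂ) + c) ≠ 0) :
    Tendsto (fun N : ℕ => ∑ t ∈ range (N + 1), x ^ t / ((t : ℂ) + c)) atTop (𝓝 (phiF c x)) := by
  obtain ⟨L, hL⟩ := my_dirichlet hnorm hx1 c hc
  have h2 : Tendsto (fun N : ℕ => ∑ t ∈ range (N + 1), x ^ t / ((t : ℂ) + c)) atTop (𝓝 L) :=
    hL.comp (tendsto_add_atTop_nat 1)
  rw [phiF, h2.limUnder_eq]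
  exact h2

lemma my_cmhzP_singleton (k : ℕ) (x b : ℂ) (N : ℕ) :
    cmhzP [(k, x, b)] N = ∑ j ∈ range N, x ^ (j + 1) / (((j + 1 : ℕ) : ℂ) + b - 1) ^ k := by
  classical
  rw [cmhzP]
  have h0 : (0 : ℕ) < [(k, x, b)].length := by simp
  set i0 : Fin [(k, x, b)].length := ⟨0, h0⟩ with hi0
  have hall : ∀ i : Fin [(k, x, b)].length, i = i0 := by
    intro i
    have hlt := i.2
    simp only [List.length_cons, List.length_nil] at hlt
    ext
    simp only [hi0]
    omega
  have hfilter : (Finset.univ.filter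
      (fun n : Fin [(k, x, b)].length → Fin N => StrictMono n)) = Finset.univ := by
    apply Finset.filter_true_of_mem
    intro f _ i j hij
    exact absurd hij (by rw [hall i, hall j]; exact lt_irrefl _)
  rw [hfilter]
  have hprod : ∀ f : Fin [(k, x, b)].length → Fin N,
      (∏ j : Fin [(k, x, b)].length, ([(k, x, b)].get j).2.1 ^ ((f j : ℕ) + 1) /
        ((((f j : ℕ) + 1 : ℕ) : ℂ) + ([(k, x, b)].get j).2.2 - 1) ^ ([(k, x, b)].get j).1)
      = x ^ ((f i0 : ℕ) + 1) / ((((f i0 : ℕ) + 1 : ℕ) : ℂ) + b - 1) ^ k := by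
    intro f
    rw [Fintype.prod_eq_single i0 (fun j hj => absurd (hall j) hj)]
    rfl
  rw [Finset.sum_congr rfl (fun f _ => hprod f)]
  apply Eq.trans (Fintype.sum_equiv
      (⟨fun f => f i0, fun v _ => v, fun f => by funext i; rw [hall i], fun v => rfl⟩ :
        (Fin [(k, x, b)].length → Fin N) ≃ Fin N) _
      (fun v : Fin N => x ^ ((v : ℕ) + 1) / ((((v : ℕ) + 1 : ℕ) : ℂ) + b - 1) ^ k)
      (fun f => rfl))
  exact Fin.sum_univ_eq_sum_range (fun j => x ^ (j + 1) / (((j + 1 : ℕ) : ℂ) + b - 1) ^ k) N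

lemma my_lih1_eq (k : ℕ) (x b L : ℂ)
    (hL : Tendsto (fun N : ℕ => ∑ j ∈ range N, x ^ (j + 1) / (((j + 1 : ℕ) : ℂ) + b - 1) ^ k)
      atTop (𝓝 L)) : lih1 k x b = L := by
  rw [lih1, cmhz]
  have : cmhzP [(k, x, b)] = fun N => ∑ j ∈ range N, x ^ (j + 1) / (((j + 1 : ℕ) : ℂ) + b - 1) ^ k :=
    funext (my_cmhzP_singleton k x b)
  rw [this]
  exact hL.limUnder_eq

variable {y v : ℂ} {d : ℕ → ℂ}

lemma my_geom_summable_norm (hy : ‖y‖ = 1) (hv : ∀ j, ‖v‖ < ‖d j‖)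
    {C : ℝ} (hgrow : ∀ j : ℕ, (j : ℝ) - C ≤ ‖d j‖) :
    Summable (fun p : ℕ × ℕ => ‖y ^ (p.1 + 1) * v ^ (p.2 + 1) / (d p.1) ^ (p.2 + 2)‖) := by
  set ρ : ℝ := ‖v‖ with hρ
  have hρnn : 0 ≤ ρ := norm_nonneg v
  have hnorm : ∀ j m : ℕ, ‖y ^ (j + 1) * v ^ (m + 1) / (d j) ^ (m + 2)‖
      = ρ ^ (m + 1) / ‖d j‖ ^ (m + 2) := by
    intro j m
    rw [norm_div, norm_mul, norm_pow, norm_pow, norm_pow, hy, one_pow, one_mul]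
  have hDpos : ∀ j, 0 < ‖d j‖ := fun j => lt_of_le_of_lt hρnn (hv j)
  have hsummm : ∀ j, Summable (fun m : ℕ => ρ ^ (m + 1) / ‖d j‖ ^ (m + 2)) := by
    intro j
    have hr : ρ / ‖d j‖ < 1 := (div_lt_one (hDpos j)).mpr (hv j)
    have hrnn : 0 ≤ ρ / ‖d j‖ := div_nonneg hρnn (hDpos j).le
    apply ((summable_geometric_of_lt_one hrnn hr).mul_left (ρ / ‖d j‖ ^ 2)).congr
    intro m
    rw [div_pow]
    field_simp
    ring
  have htsum : ∀ j, (∑' m : ℕ, ρ ^ (m + 1) / ‖d j‖ ^ (m + 2))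
      = ρ / ‖d j‖ ^ 2 * (1 - ρ / ‖d j‖)⁻¹ := by
    intro j
    have hr : ρ / ‖d j‖ < 1 := (div_lt_one (hDpos j)).mpr (hv j)
    have hrnn : 0 ≤ ρ / ‖d j‖ := div_nonneg hρnn (hDpos j).le
    rw [← tsum_geometric_of_lt_one hrnn hr, ← tsum_mul_left]
    apply tsum_congr
    intro m
    rw [div_pow]
    field_simp
    ring
  rw [show (fun p : ℕ × ℕ => ‖y ^ (p.1 + 1) * v ^ (p.2 + 1) / (d p.1) ^ (p.2 + 2)‖)
      = fun p : ℕ × ℕ => ρ ^ (p.2 + 1) / ‖d p.1‖ ^ (p.2 + 2) from funext fun p => hnorm p.1 p.2]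
  apply (summable_prod_of_nonneg (fun p => by positivity)).mpr
  refine ⟨fun j => hsummm j, ?_⟩
  apply Summable.of_norm_bounded_eventually_nat (g := fun j => 8 * ρ / (j : ℝ) ^ 2)
  · have := (Real.summable_one_div_nat_pow.mpr (show 1 < 2 by norm_num)).mul_left (8 * ρ)
    apply this.congr
    intro i
    rw [mul_one_div]
  · filter_upwards [eventually_ge_atTop (⌈2 * C + 4 * ρ + 4⌉₊), eventually_ge_atTop 1] with j hj hj1
    have hj' : 2 * C + 4 * ρ + 4 ≤ (j : ℝ) := le_trans (Nat.le_ceil _) (by exact_mod_cast Nat.cast_le.mpr hj)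
    have hD : (j : ℝ) / 2 ≤ ‖d j‖ := by
      have := hgrow j
      nlinarith
    have hD2 : 2 * ρ + 2 ≤ ‖d j‖ := by nlinarith [hgrow j]
    have hjpos : (0 : ℝ) < (j : ℝ) := by exact_mod_cast hj1
    have hhalf : (1 : ℝ) - ρ / ‖d j‖ ≥ 1 / 2 := by
      have h1 : ρ / ‖d j‖ ≤ 1 / 2 := by
        rw [div_le_iff₀ (hDpos j)]
        nlinarith
      linarith
    have habs : ‖∑' m : ℕ, ρ ^ (m + 1) / ‖d j‖ ^ (m + 2)‖
        = ∑' m : ℕ, ρ ^ (m + 1) / ‖d j‖ ^ (m + 2) := by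
      rw [Real.norm_eq_abs, abs_of_nonneg]
      exact tsum_nonneg (fun m => by positivity)
    rw [habs, htsum j]
    have hinv : (1 - ρ / ‖d j‖)⁻¹ ≤ 2 := by
      rw [show (2 : ℝ) = (1 / 2)⁻¹ by norm_num]
      apply inv_anti₀ (by norm_num) hhalf
    calc ρ / ‖d j‖ ^ 2 * (1 - ρ / ‖d j‖)⁻¹ ≤ ρ / ‖d j‖ ^ 2 * 2 := by
          apply mul_le_mul_of_nonneg_left hinv (by positivity)
      _ ≤ ρ / ((j : ℝ) / 2) ^ 2 * 2 := by
          apply mul_le_mul_of_nonneg_right ?_ (by norm_num)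
          apply div_le_div_of_nonneg_left hρnn (by positivity)
          apply pow_le_pow_left₀ (by positivity) hD
      _ = 8 * ρ / (j : ℝ) ^ 2 := by field_simp; ring

lemma my_geom_summable (hy : ‖y‖ = 1) (hv : ∀ j, ‖v‖ < ‖d j‖)
    {C : ℝ} (hgrow : ∀ j : ℕ, (j : ℝ) - C ≤ ‖d j‖) :
    Summable (fun p : ℕ × ℕ => y ^ (p.1 + 1) * v ^ (p.2 + 1) / (d p.1) ^ (p.2 + 2)) :=
  Summable.of_norm (my_geom_summable_norm hy hv hgrow)

lemma my_geom_inner (hv : ∀ j, ‖v‖ < ‖d j‖) (j : ℕ) :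
    (∑' m : ℕ, y ^ (j + 1) * v ^ (m + 1) / (d j) ^ (m + 2))
      = y ^ (j + 1) * (1 / (d j - v) - 1 / (d j)) := by
  have hDpos : 0 < ‖d j‖ := lt_of_le_of_lt (norm_nonneg v) (hv j)
  have hd : d j ≠ 0 := norm_pos_iff.mp hDpos
  have hdv : d j - v ≠ 0 := by
    have h := lt_of_lt_of_le (sub_pos.mpr (hv j)) (norm_sub_norm_le (d j) v)
    exact norm_pos_iff.mp h
  have hr : ‖v / d j‖ < 1 := by
    rw [norm_div]
    exact (div_lt_one hDpos).mpr (hv j)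
  have hpt : ∀ m : ℕ, y ^ (j + 1) * v ^ (m + 1) / (d j) ^ (m + 2)
      = (y ^ (j + 1) / (d j)) * (v / d j) * (v / d j) ^ m := by
    intro m
    rw [div_pow]
    field_simp
    ring
  rw [tsum_congr hpt, tsum_mul_left, tsum_geometric_of_norm_lt_one hr]
  have h1r : (1 : ℂ) - v / d j = (d j - v) / d j := by field_simp
  rw [h1r, inv_div]
  field_simp
  ring

lemma my_finite_identity (x s : ℂ) (hx0 : x ≠ 0) (n M : ℕ) :
    x ^ n * (∑ j ∈ range (M + n + 1), x ^ (j + 1) / ((j : ℂ) + 1 + n + s))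
      - x ^ (n + 1) * (∑ j ∈ range (M + n + 1), (x⁻¹) ^ (j + 1) / ((j : ℂ) - n - s))
    = (∑ t ∈ range (M + 2 * n + 1 + 1), x ^ t / ((t : ℂ) + s))
      - (∑ t ∈ range (M + 1), (x⁻¹) ^ t / ((t : ℂ) - s)) - 1 / s := by
  have h1 : x ^ n * (∑ j ∈ range (M + n + 1), x ^ (j + 1) / ((j : ℂ) + 1 + n + s))
      = ∑ j ∈ range (M + n + 1), x ^ (n + 1 + j) / (((n + 1 + j : ℕ) : ℂ) + s) := by
    rw [Finset.mul_sum]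
    apply Finset.sum_congr rfl
    intro j _
    rw [← mul_div_assoc, ← pow_add]
    rw [show n + (j + 1) = n + 1 + j by ring]
    congr 1
    push_cast
    ring
  have h2 : (∑ t ∈ range (M + 2 * n + 1 + 1), x ^ t / ((t : ℂ) + s))
      = (∑ t ∈ range (n + 1), x ^ t / ((t : ℂ) + s))
        + ∑ j ∈ range (M + n + 1), x ^ (n + 1 + j) / (((n + 1 + j : ℕ) : ℂ) + s) := by
    rw [show M + 2 * n + 1 + 1 = (n + 1) + (M + n + 1) by ring]
    exact Finset.sum_range_add (fun t => x ^ t / ((t : ℂ) + s)) (n + 1) (M + n + 1)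
  have h3 : (∑ j ∈ range (M + n + 1), (x⁻¹) ^ (j + 1) / ((j : ℂ) - n - s))
      = (∑ j ∈ range (n + 1), (x⁻¹) ^ (j + 1) / ((j : ℂ) - n - s))
        + ∑ i ∈ range M, (x⁻¹) ^ (n + 1 + i + 1) / (((n + 1 + i : ℕ) : ℂ) - n - s) := by
    rw [show M + n + 1 = (n + 1) + M by ring]
    exact Finset.sum_range_add (fun j => (x⁻¹) ^ (j + 1) / ((j : ℂ) - n - s)) (n + 1) M
  have h4 : x ^ (n + 1) * (∑ j ∈ range (n + 1), (x⁻¹) ^ (j + 1) / ((j : ℂ) - n - s))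
      = - ∑ t ∈ range (n + 1), x ^ t / ((t : ℂ) + s) := by
    rw [Finset.mul_sum]
    rw [← Finset.sum_range_reflect
      (fun j => x ^ (n + 1) * ((x⁻¹) ^ (j + 1) / ((j : ℂ) - n - s))) (n + 1)]
    rw [← Finset.sum_neg_distrib]
    apply Finset.sum_congr rfl
    intro j hj
    have hjn : j ≤ n := by have := Finset.mem_range.mp hj; omega
    have hcast : ((n + 1 - 1 - j : ℕ) : ℂ) = (n : ℂ) - (j : ℂ) := by
      have he : n + 1 - 1 - j = n - j := by omega
      rw [he, Nat.cast_sub hjn]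
    have hpow : x ^ (n + 1) * (x⁻¹) ^ (n + 1 - 1 - j + 1) = x ^ j := by
      have hexp : n + 1 - 1 - j + 1 = n + 1 - j := by omega
      rw [hexp, inv_pow, ← pow_sub₀ x hx0 (by omega : n + 1 - j ≤ n + 1)]
      congr 1
      omega
    calc x ^ (n + 1) * ((x⁻¹) ^ (n + 1 - 1 - j + 1) / (((n + 1 - 1 - j : ℕ) : ℂ) - n - s))
        = (x ^ (n + 1) * (x⁻¹) ^ (n + 1 - 1 - j + 1)) / (((n + 1 - 1 - j : ℕ) : ℂ) - n - s) :=
          (mul_div_assoc _ _ _).symm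
      _ = x ^ j / (((n : ℂ) - j) - n - s) := by rw [hpow, hcast]
      _ = -(x ^ j / ((j : ℂ) + s)) := by
          rw [show ((n : ℂ) - j) - n - s = -((j : ℂ) + s) by ring, div_neg]
  have h5 : x ^ (n + 1) * (∑ i ∈ range M, (x⁻¹) ^ (n + 1 + i + 1) / (((n + 1 + i : ℕ) : ℂ) - n - s))
      = ∑ i ∈ range M, (x⁻¹) ^ (i + 1) / (((i + 1 : ℕ) : ℂ) - s) := by
    rw [Finset.mul_sum]
    apply Finset.sum_congr rfl
    intro i _
    have hpow : x ^ (n + 1) * (x⁻¹) ^ (n + 1 + i + 1) = (x⁻¹) ^ (i + 1) := by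
      rw [show (x⁻¹) ^ (n + 1 + i + 1) = (x⁻¹) ^ (n + 1) * (x⁻¹) ^ (i + 1) from by
          rw [← pow_add] <;> congr 1 <;> omega,
        ← mul_assoc, ← mul_pow, mul_inv_cancel₀ hx0, one_pow, one_mul]
    have hden : ((n + 1 + i : ℕ) : ℂ) - n - s = ((i + 1 : ℕ) : ℂ) - s := by push_cast; ring
    rw [← mul_div_assoc, hpow, hden]
  have h6 : (∑ t ∈ range (M + 1), (x⁻¹) ^ t / ((t : ℂ) - s))
      = (∑ i ∈ range M, (x⁻¹) ^ (i + 1) / (((i + 1 : ℕ) : ℂ) - s))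
        + (x⁻¹) ^ 0 / (((0 : ℕ) : ℂ) - s) :=
    Finset.sum_range_succ' (fun t => (x⁻¹) ^ t / ((t : ℂ) - s)) M
  have h7 : (x⁻¹) ^ 0 / (((0 : ℕ) : ℂ) - s) = -(1 / s) := by
    rw [pow_zero, Nat.cast_zero, zero_sub, div_neg]
  rw [h1, h3, h2, h6, mul_add, h4, h5, h7]
  ring

end MyAux

/-- Expansion of `Φ(s; x)` around the non-integer point `−n−a` (Lemma `lem-xu-yu-one`). -/
theorem PhiF_expansion_at_nonint (x : ℂ) (hx : IsRootOfUnity x) (hx1 : x ≠ 1)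
    (n : ℕ) (a : ℂ) (ha : ∀ z : ℤ, a ≠ (z : ℂ)) (s : ℂ)
    (h1 : 0 < ‖s + (n : ℂ) + a‖)
    (h2 : ∀ m : ℤ, ‖s + (n : ℂ) + a‖ < ‖a - (m : ℂ)‖) :
    Summable (fun m : ℕ =>
      ((-1 : ℂ) ^ m * lih1 (m + 1) x (1 - a) - x * lih1 (m + 1) x⁻¹ a)
        * (s + (n : ℂ) + a) ^ m) ∧
    PhiF s x = x ^ n * ∑' m : ℕ,
      ((-1 : ℂ) ^ m * lih1 (m + 1) x (1 - a) - x * lih1 (m + 1) x⁻¹ a)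
        * (s + (n : ℂ) + a) ^ m := by
  classical
  obtain ⟨Nx, hNx, hxN⟩ := hx
  have hxnorm : ‖x‖ = 1 := Complex.norm_eq_one_of_pow_eq_one hxN hNx.ne'
  have hx0 : x ≠ 0 := by
    intro h
    rw [h] at hxnorm
    simp at hxnorm
  have hxinorm : ‖x⁻¹‖ = 1 := by rw [norm_inv, hxnorm, inv_one]
  have hxi1 : x⁻¹ ≠ 1 := by
    intro h
    apply hx1
    rw [← inv_inv x, h, inv_one]
  set w : ℂ := s + (n : ℂ) + a with hw
  have hwnorm : ∀ m : ℤ, ‖w‖ < ‖a - (m : ℂ)‖ := by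
    intro m
    have := h2 m
    exact this
  have hw0 : w ≠ 0 := by
    intro h
    rw [h] at h1
    simp at h1
  have hs : ∀ k : ℤ, ((k : ℂ) + s) ≠ 0 := by
    intro k hk
    have hkey : a - ((k - n : ℤ) : ℂ) = w := by
      rw [hw]; push_cast
      linear_combination -hk
    have := hwnorm (k - n)
    rw [hkey] at this
    exact lt_irrefl _ this
  -- denominators
  have hv1 : ∀ j : ℕ, ‖-w‖ < ‖(j : ℂ) + 1 - a‖ := by
    intro j
    rw [norm_neg]
    have h := hwnorm ((j : ℤ) + 1)
    rwa [show (a - (((j : ℤ) + 1 : ℤ) : ℂ)) = -((j : ℂ) + 1 - a) by push_cast; ring,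
      norm_neg] at h
  have hv2 : ∀ j : ℕ, ‖w‖ < ‖(j : ℂ) + a‖ := by
    intro j
    have h := hwnorm (-(j : ℤ))
    rwa [show (a - ((-(j : ℤ) : ℤ) : ℂ)) = (j : ℂ) + a by push_cast; ring] at h
  have hD1ne : ∀ j : ℕ, ((j : ℂ) + 1 - a) ≠ 0 :=
    fun j => norm_pos_iff.mp (lt_of_le_of_lt (norm_nonneg _) (hv1 j))
  have hD2ne : ∀ j : ℕ, ((j : ℂ) + a) ≠ 0 :=
    fun j => norm_pos_iff.mp (lt_of_le_of_lt (norm_nonneg _) (hv2 j))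
  have hgrow1 : ∀ j : ℕ, (j : ℝ) - ‖a‖ ≤ ‖(j : ℂ) + 1 - a‖ := by
    intro j
    have h := norm_sub_norm_le ((j : ℂ) + 1) a
    have h2' : (j : ℝ) ≤ ‖(j : ℂ) + 1‖ := by
      rw [show ((j : ℂ) + 1) = ((j + 1 : ℕ) : ℂ) by push_cast; ring, Complex.norm_natCast]
      exact_mod_cast Nat.le_succ j
    linarith
  have hgrow2 : ∀ j : ℕ, (j : ℝ) - ‖a‖ ≤ ‖(j : ℂ) + a‖ := by
    intro j
    have h := norm_sub_norm_le ((j : ℂ)) (-a)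
    rw [sub_neg_eq_add, norm_neg, Complex.norm_natCast] at h
    linarith
  -- the two summable double families
  have hF1 : Summable (fun p : ℕ × ℕ =>
      x ^ (p.1 + 1) * (-w) ^ (p.2 + 1) / ((p.1 : ℂ) + 1 - a) ^ (p.2 + 2)) :=
    my_geom_summable (d := fun j : ℕ => (j : ℂ) + 1 - a) hxnorm hv1 hgrow1
  have hF2 : Summable (fun p : ℕ × ℕ =>
      (x⁻¹) ^ (p.1 + 1) * w ^ (p.2 + 1) / ((p.1 : ℂ) + a) ^ (p.2 + 2)) :=
    my_geom_summable (d := fun j : ℕ => (j : ℂ) + a) hxinorm hv2 hgrow2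
  -- depth-one conditional values
  have hcA : ∀ k : ℕ, ((k : ℂ) + (1 - a)) ≠ 0 := by
    intro k hk
    exact ha ((k : ℤ) + 1) (by push_cast; linear_combination -hk)
  have hcB : ∀ k : ℕ, ((k : ℂ) + a) ≠ 0 := by
    intro k hk
    exact ha (-(k : ℤ)) (by push_cast; linear_combination hk)
  obtain ⟨LA, hLA⟩ := my_dirichlet hxnorm hx1 (1 - a) hcA
  obtain ⟨LB, hLB⟩ := my_dirichlet hxinorm hxi1 a hcB
  have hA0 : lih1 1 x (1 - a) = x * LA := by
    apply my_lih1_eq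
    apply (hLA.const_mul x).congr
    intro N
    rw [Finset.mul_sum]
    apply Finset.sum_congr rfl
    intro j _
    rw [pow_one, show (((j + 1 : ℕ) : ℂ) + (1 - a) - 1) = (j : ℂ) + (1 - a) by push_cast; ring,
      pow_succ]
    ring
  have hB0 : lih1 1 x⁻¹ a = x⁻¹ * LB := by
    apply my_lih1_eq
    apply (hLB.const_mul x⁻¹).congr
    intro N
    rw [Finset.mul_sum]
    apply Finset.sum_congr rfl
    intro j _
    rw [pow_one, show (((j + 1 : ℕ) : ℂ) + a - 1) = (j : ℂ) + a by push_cast; ring, pow_succ]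
    ring
  have hA0T : Tendsto (fun N : ℕ => ∑ j ∈ range N, x ^ (j + 1) / ((j : ℂ) + 1 - a))
      atTop (𝓝 (lih1 1 x (1 - a))) := by
    rw [hA0]
    apply (hLA.const_mul x).congr
    intro N
    rw [Finset.mul_sum]
    apply Finset.sum_congr rfl
    intro j _
    rw [show ((j : ℂ) + 1 - a) = (j : ℂ) + (1 - a) by ring, pow_succ]
    ring
  have hB0T : Tendsto (fun N : ℕ => ∑ j ∈ range N, (x⁻¹) ^ (j + 1) / ((j : ℂ) + a))
      atTop (𝓝 (lih1 1 x⁻¹ a)) := by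
    rw [hB0]
    apply (hLB.const_mul x⁻¹).congr
    intro N
    rw [Finset.mul_sum]
    apply Finset.sum_congr rfl
    intro j _
    rw [pow_succ]
    ring
  -- depth-one absolutely convergent values
  have hsum1 : ∀ m : ℕ, Summable (fun j : ℕ => x ^ (j + 1) / ((j : ℂ) + 1 - a) ^ (m + 2)) := by
    intro m
    have hbase : Summable (fun j : ℕ =>
        x ^ (j + 1) * (-w) ^ (m + 1) / ((j : ℂ) + 1 - a) ^ (m + 2)) :=
      hF1.prod_symm.prod_factor m
    have hwne : (-w) ^ (m + 1) ≠ 0 := pow_ne_zero _ (neg_ne_zero.mpr hw0)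
    apply (hbase.div_const ((-w) ^ (m + 1))).congr
    intro j
    have hDne := pow_ne_zero (m + 2) (hD1ne j)
    field_simp
  have hsum2 : ∀ m : ℕ, Summable (fun j : ℕ => (x⁻¹) ^ (j + 1) / ((j : ℂ) + a) ^ (m + 2)) := by
    intro m
    have hbase : Summable (fun j : ℕ =>
        (x⁻¹) ^ (j + 1) * w ^ (m + 1) / ((j : ℂ) + a) ^ (m + 2)) :=
      hF2.prod_symm.prod_factor m
    have hwne : w ^ (m + 1) ≠ 0 := pow_ne_zero _ hw0
    apply (hbase.div_const (w ^ (m + 1))).congr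
    intro j
    have hDne := pow_ne_zero (m + 2) (hD2ne j)
    field_simp
  have hlih2 : ∀ m : ℕ, lih1 (m + 2) x (1 - a)
      = ∑' j : ℕ, x ^ (j + 1) / ((j : ℂ) + 1 - a) ^ (m + 2) := by
    intro m
    apply my_lih1_eq
    apply ((hsum1 m).hasSum.tendsto_sum_nat).congr
    intro N
    apply Finset.sum_congr rfl
    intro j _
    rw [show (((j + 1 : ℕ) : ℂ) + (1 - a) - 1) = (j : ℂ) + 1 - a by push_cast; ring]
  have hlih2' : ∀ m : ℕ, lih1 (m + 2) x⁻¹ a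
      = ∑' j : ℕ, (x⁻¹) ^ (j + 1) / ((j : ℂ) + a) ^ (m + 2) := by
    intro m
    apply my_lih1_eq
    apply ((hsum2 m).hasSum.tendsto_sum_nat).congr
    intro N
    apply Finset.sum_congr rfl
    intro j _
    rw [show (((j + 1 : ℕ) : ℂ) + a - 1) = (j : ℂ) + a by push_cast; ring]
  -- coefficients
  set F : ℕ → ℂ := fun m =>
    ((-1 : ℂ) ^ m * lih1 (m + 1) x (1 - a) - x * lih1 (m + 1) x⁻¹ a) * w ^ m with hFdef
  have hcoef : ∀ m : ℕ, F (m + 1)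
      = (∑' j : ℕ, x ^ (j + 1) * (-w) ^ (m + 1) / ((j : ℂ) + 1 - a) ^ (m + 2))
        - x * ∑' j : ℕ, (x⁻¹) ^ (j + 1) * w ^ (m + 1) / ((j : ℂ) + a) ^ (m + 2) := by
    intro m
    have hstep : F (m + 1) = ((-1 : ℂ) ^ (m + 1) * w ^ (m + 1))
          * (∑' j : ℕ, x ^ (j + 1) / ((j : ℂ) + 1 - a) ^ (m + 2))
        - x * (w ^ (m + 1) * ∑' j : ℕ, (x⁻¹) ^ (j + 1) / ((j : ℂ) + a) ^ (m + 2)) := by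
      simp only [hFdef]
      rw [show m + 1 + 1 = m + 2 from rfl, hlih2 m, hlih2' m]
      ring
    rw [hstep, ← tsum_mul_left, ← tsum_mul_left]
    congr 1
    · exact tsum_congr fun j => by
        rw [show (-w) ^ (m + 1) = (-1 : ℂ) ^ (m + 1) * w ^ (m + 1) from by rw [neg_pow],
          mul_comm (x ^ (j + 1)) ((-1 : ℂ) ^ (m + 1) * w ^ (m + 1)), mul_div_assoc]
    · congr 1
      exact tsum_congr fun j => by
        rw [mul_comm ((x⁻¹) ^ (j + 1)) (w ^ (m + 1)), mul_div_assoc]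
  have hs1' : Summable (fun m : ℕ =>
      ∑' j : ℕ, x ^ (j + 1) * (-w) ^ (m + 1) / ((j : ℂ) + 1 - a) ^ (m + 2)) :=
    hF1.prod_symm.prod
  have hs2' : Summable (fun m : ℕ =>
      ∑' j : ℕ, (x⁻¹) ^ (j + 1) * w ^ (m + 1) / ((j : ℂ) + a) ^ (m + 2)) :=
    hF2.prod_symm.prod
  have hFsucc : Summable (fun m : ℕ => F (m + 1)) :=
    (hs1'.sub (hs2'.mul_left x)).congr (fun m => (hcoef m).symm)
  have hFsummable : Summable F := (summable_nat_add_iff 1).mp hFsucc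
  -- inner geometric evaluations
  have hinner1 : ∀ j : ℕ, (∑' m : ℕ, x ^ (j + 1) * (-w) ^ (m + 1) / ((j : ℂ) + 1 - a) ^ (m + 2))
      = x ^ (j + 1) * (1 / ((j : ℂ) + 1 + n + s) - 1 / ((j : ℂ) + 1 - a)) := by
    intro j
    calc (∑' m : ℕ, x ^ (j + 1) * (-w) ^ (m + 1) / ((j : ℂ) + 1 - a) ^ (m + 2))
        = x ^ (j + 1) * (1 / ((j : ℂ) + 1 - a - -w) - 1 / ((j : ℂ) + 1 - a)) :=
          my_geom_inner (d := fun j : ℕ => (j : ℂ) + 1 - a) hv1 j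
      _ = x ^ (j + 1) * (1 / ((j : ℂ) + 1 + n + s) - 1 / ((j : ℂ) + 1 - a)) := by
          rw [show ((j : ℂ) + 1 - a - -w) = (j : ℂ) + 1 + n + s by rw [hw]; ring]
  have hinner2 : ∀ j : ℕ, (∑' m : ℕ, (x⁻¹) ^ (j + 1) * w ^ (m + 1) / ((j : ℂ) + a) ^ (m + 2))
      = (x⁻¹) ^ (j + 1) * (1 / ((j : ℂ) - n - s) - 1 / ((j : ℂ) + a)) := by
    intro j
    calc (∑' m : ℕ, (x⁻¹) ^ (j + 1) * w ^ (m + 1) / ((j : ℂ) + a) ^ (m + 2))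
        = (x⁻¹) ^ (j + 1) * (1 / ((j : ℂ) + a - w) - 1 / ((j : ℂ) + a)) :=
          my_geom_inner (d := fun j : ℕ => (j : ℂ) + a) hv2 j
      _ = (x⁻¹) ^ (j + 1) * (1 / ((j : ℂ) - n - s) - 1 / ((j : ℂ) + a)) := by
          rw [show ((j : ℂ) + a - w) = (j : ℂ) - n - s by rw [hw]; ring]
  -- tail sums
  set T1 : ℂ := ∑' j : ℕ, x ^ (j + 1) * (1 / ((j : ℂ) + 1 + n + s) - 1 / ((j : ℂ) + 1 - a))
    with hT1def
  set T2 : ℂ := ∑' j : ℕ, (x⁻¹) ^ (j + 1) * (1 / ((j : ℂ) - n - s) - 1 / ((j : ℂ) + a))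
    with hT2def
  have hbase1 : Summable (fun j : ℕ =>
      ∑' m : ℕ, x ^ (j + 1) * (-w) ^ (m + 1) / ((j : ℂ) + 1 - a) ^ (m + 2)) := hF1.prod
  have hbase2 : Summable (fun j : ℕ =>
      ∑' m : ℕ, (x⁻¹) ^ (j + 1) * w ^ (m + 1) / ((j : ℂ) + a) ^ (m + 2)) := hF2.prod
  have hS1sum : Summable (fun j : ℕ =>
      x ^ (j + 1) * (1 / ((j : ℂ) + 1 + n + s) - 1 / ((j : ℂ) + 1 - a))) :=
    hbase1.congr hinner1
  have hS2sum : Summable (fun j : ℕ =>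
      (x⁻¹) ^ (j + 1) * (1 / ((j : ℂ) - n - s) - 1 / ((j : ℂ) + a))) :=
    hbase2.congr hinner2
  have hS1T : Tendsto (fun N : ℕ => ∑ j ∈ range N,
      x ^ (j + 1) * (1 / ((j : ℂ) + 1 + n + s) - 1 / ((j : ℂ) + 1 - a))) atTop (𝓝 T1) :=
    hS1sum.hasSum.tendsto_sum_nat
  have hS2T : Tendsto (fun N : ℕ => ∑ j ∈ range N,
      (x⁻¹) ^ (j + 1) * (1 / ((j : ℂ) - n - s) - 1 / ((j : ℂ) + a))) atTop (𝓝 T2) :=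
    hS2sum.hasSum.tendsto_sum_nat
  -- swap the double sums
  have hswap1 : (∑' m : ℕ, ∑' j : ℕ, x ^ (j + 1) * (-w) ^ (m + 1) / ((j : ℂ) + 1 - a) ^ (m + 2))
      = ∑' j : ℕ, ∑' m : ℕ, x ^ (j + 1) * (-w) ^ (m + 1) / ((j : ℂ) + 1 - a) ^ (m + 2) := by
    have huncurry : Summable (Function.uncurry fun (j m : ℕ) =>
        x ^ (j + 1) * (-w) ^ (m + 1) / ((j : ℂ) + 1 - a) ^ (m + 2)) := hF1
    exact Summable.tsum_comm huncurry
  have hswap2 : (∑' m : ℕ, ∑' j : ℕ, (x⁻¹) ^ (j + 1) * w ^ (m + 1) / ((j : ℂ) + a) ^ (m + 2))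
      = ∑' j : ℕ, ∑' m : ℕ, (x⁻¹) ^ (j + 1) * w ^ (m + 1) / ((j : ℂ) + a) ^ (m + 2) := by
    have huncurry : Summable (Function.uncurry fun (j m : ℕ) =>
        (x⁻¹) ^ (j + 1) * w ^ (m + 1) / ((j : ℂ) + a) ^ (m + 2)) := hF2
    exact Summable.tsum_comm huncurry
  -- total sum of coefficients
  have htsumF : ∑' m : ℕ, F m
      = (lih1 1 x (1 - a) - x * lih1 1 x⁻¹ a) + (T1 - x * T2) := by
    rw [Summable.tsum_eq_zero_add hFsummable]
    have hF0 : F 0 = lih1 1 x (1 - a) - x * lih1 1 x⁻¹ a := by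
      simp [hFdef]
    rw [hF0]
    congr 1
    calc (∑' m : ℕ, F (m + 1))
        = ∑' m : ℕ, ((∑' j : ℕ, x ^ (j + 1) * (-w) ^ (m + 1) / ((j : ℂ) + 1 - a) ^ (m + 2))
            - x * ∑' j : ℕ, (x⁻¹) ^ (j + 1) * w ^ (m + 1) / ((j : ℂ) + a) ^ (m + 2)) :=
          tsum_congr hcoef
      _ = (∑' m : ℕ, ∑' j : ℕ, x ^ (j + 1) * (-w) ^ (m + 1) / ((j : ℂ) + 1 - a) ^ (m + 2))
            - ∑' m : ℕ, x * ∑' j : ℕ, (x⁻¹) ^ (j + 1) * w ^ (m + 1) / ((j : ℂ) + a) ^ (m + 2) :=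
          Summable.tsum_sub hs1' (hs2'.mul_left x)
      _ = (∑' m : ℕ, ∑' j : ℕ, x ^ (j + 1) * (-w) ^ (m + 1) / ((j : ℂ) + 1 - a) ^ (m + 2))
            - x * ∑' m : ℕ, ∑' j : ℕ, (x⁻¹) ^ (j + 1) * w ^ (m + 1) / ((j : ℂ) + a) ^ (m + 2) := by
          rw [tsum_mul_left]
      _ = (∑' j : ℕ, ∑' m : ℕ, x ^ (j + 1) * (-w) ^ (m + 1) / ((j : ℂ) + 1 - a) ^ (m + 2))
            - x * ∑' j : ℕ, ∑' m : ℕ, (x⁻¹) ^ (j + 1) * w ^ (m + 1) / ((j : ℂ) + a) ^ (m + 2) := by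
          rw [hswap1, hswap2]
      _ = T1 - x * T2 := by
          rw [hT1def, hT2def]
          congr 1
          · exact tsum_congr hinner1
          · congr 1
            exact tsum_congr hinner2
  -- assemble the telescoping limits
  have hcomb1 : Tendsto (fun N : ℕ => ∑ j ∈ range N, x ^ (j + 1) / ((j : ℂ) + 1 + n + s))
      atTop (𝓝 (lih1 1 x (1 - a) + T1)) := by
    apply (hA0T.add hS1T).congr
    intro N
    rw [← Finset.sum_add_distrib]
    apply Finset.sum_congr rfl
    intro j _
    ring
  have hcomb2 : Tendsto (fun N : ℕ => ∑ j ∈ range N, (x⁻¹) ^ (j + 1) / ((j : ℂ) - n - s))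
      atTop (𝓝 (lih1 1 x⁻¹ a + T2)) := by
    apply (hB0T.add hS2T).congr
    intro N
    rw [← Finset.sum_add_distrib]
    apply Finset.sum_congr rfl
    intro j _
    ring
  have hE : Tendsto (fun N : ℕ => (∑ j ∈ range N, x ^ (j + 1) / ((j : ℂ) + 1 + n + s))
        - x * ∑ j ∈ range N, (x⁻¹) ^ (j + 1) / ((j : ℂ) - n - s))
      atTop (𝓝 (∑' m : ℕ, F m)) := by
    have hval : (lih1 1 x (1 - a) + T1) - x * (lih1 1 x⁻¹ a + T2)
        = (lih1 1 x (1 - a) - x * lih1 1 x⁻¹ a) + (T1 - x * T2) := by ring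
    rw [htsumF, ← hval]
    exact hcomb1.sub (hcomb2.const_mul x)
  have hxE : Tendsto (fun M : ℕ => x ^ n *
      ((∑ j ∈ range (M + n + 1), x ^ (j + 1) / ((j : ℂ) + 1 + n + s))
        - x * ∑ j ∈ range (M + n + 1), (x⁻¹) ^ (j + 1) / ((j : ℂ) - n - s)))
      atTop (𝓝 (x ^ n * ∑' m : ℕ, F m)) :=
    (hE.comp (tendsto_add_atTop_nat (n + 1))).const_mul (x ^ n)
  have hId : ∀ M : ℕ, x ^ n *
      ((∑ j ∈ range (M + n + 1), x ^ (j + 1) / ((j : ℂ) + 1 + n + s))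
        - x * ∑ j ∈ range (M + n + 1), (x⁻¹) ^ (j + 1) / ((j : ℂ) - n - s))
      = (∑ t ∈ range (M + 2 * n + 1 + 1), x ^ t / ((t : ℂ) + s))
        - (∑ t ∈ range (M + 1), (x⁻¹) ^ t / ((t : ℂ) - s)) - 1 / s := by
    intro M
    have hfi := my_finite_identity x s hx0 n M
    linear_combination hfi
  have hP : Tendsto (fun N : ℕ => ∑ t ∈ range (N + 1), x ^ t / ((t : ℂ) + s))
      atTop (𝓝 (phiF s x)) := by
    apply my_phiF_tendsto hxnorm hx1 s
    intro k
    have := hs (k : ℤ)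
    push_cast at this
    exact this
  have hQ0 : Tendsto (fun N : ℕ => ∑ t ∈ range (N + 1), (x⁻¹) ^ t / ((t : ℂ) + -s))
      atTop (𝓝 (phiF (-s) x⁻¹)) := by
    apply my_phiF_tendsto hxinorm hxi1 (-s)
    intro k hk
    apply hs (-(k : ℤ))
    push_cast
    linear_combination -hk
  have hQ : Tendsto (fun M : ℕ => ∑ t ∈ range (M + 1), (x⁻¹) ^ t / ((t : ℂ) - s))
      atTop (𝓝 (phiF (-s) x⁻¹)) := by
    apply hQ0.congr
    intro N
    apply Finset.sum_congr rfl
    intro t _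
    rw [sub_eq_add_neg]
  have hRHS : Tendsto (fun M : ℕ =>
      (∑ t ∈ range (M + 2 * n + 1 + 1), x ^ t / ((t : ℂ) + s))
        - (∑ t ∈ range (M + 1), (x⁻¹) ^ t / ((t : ℂ) - s)) - 1 / s)
      atTop (𝓝 (phiF s x - phiF (-s) x⁻¹ - 1 / s)) :=
    ((hP.comp (tendsto_add_atTop_nat (2 * n + 1))).sub hQ).sub_const (1 / s)
  have hmain : x ^ n * (∑' m : ℕ, F m) = phiF s x - phiF (-s) x⁻¹ - 1 / s :=
    tendsto_nhds_unique (hxE.congr hId) hRHS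
  refine ⟨hFsummable, ?_⟩
  rw [PhiF]
  exact hmain.symm
end
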